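/- Let Q be a complex symmetric 2n×2n matrix with Re Q positive semidefinite. For all t ∈ ℝ, every eigenvalue of the matrix K_t = e^{-2itJQ} e^{-2itJ\bar{Q}} is a positive real number. -/

import Mathlib

open Matrix NormedSpace Polynomial
open scoped ComplexOrder NNReal

namespace EigKtAux

variable {N : Type*} [Fintype N] [DecidableEq N]

lemma eval_charpoly (M : Matrix N N ℂ) (r : ℂ) :
    M.charpoly.eval r = (r • (1 : Matrix N N ℂ) - M).det := by
  have h1 : M.charpoly.eval r = ((Polynomial.evalRingHom r).mapMatrix (charmatrix M)).det := by
    rw [Matrix.charpoly, ← RingHom.map_det]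
    rfl
  rw [h1]
  congr 1
  ext i j
  by_cases h : i = j
  · subst h
    simp [charmatrix_apply_eq, Matrix.one_apply, Matrix.smul_apply]
  · simp [Matrix.charmatrix_apply_ne _ _ _ h, Matrix.one_apply_ne h, Matrix.smul_apply]

lemma mem_spectrum_iff_det (M : Matrix N N ℂ) (μ : ℂ) :
    μ ∈ spectrum ℂ M ↔ (μ • (1 : Matrix N N ℂ) - M).det = 0 := by
  rw [spectrum.mem_iff, Matrix.isUnit_iff_isUnit_det, isUnit_iff_ne_zero, not_not,
    Algebra.algebraMap_eq_smul_one]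

lemma exists_eigenvector {M : Matrix N N ℂ} {μ : ℂ} (h : μ ∈ spectrum ℂ M) :
    ∃ v, v ≠ 0 ∧ M *ᵥ v = μ • v := by
  rw [mem_spectrum_iff_det] at h
  obtain ⟨v, hv, hMv⟩ := (Matrix.exists_mulVec_eq_zero_iff).2 h
  refine ⟨v, hv, ?_⟩
  rw [Matrix.sub_mulVec, sub_eq_zero, Matrix.smul_mulVec, Matrix.one_mulVec] at hMv
  exact hMv.symm

lemma skew_eigen_re_zero {S : Matrix N N ℂ} (hSH : Sᴴ = -S) {u : N → ℂ} (hu : u ≠ 0)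
    {ν : ℂ} (h : S *ᵥ u = ν • u) : ν.re = 0 := by
  set d : ℂ := star u ⬝ᵥ u with hd
  have hdconj : star d = d := by
    rw [hd]
    exact (Matrix.star_dotProduct u u).symm
  have hdne : d ≠ 0 := fun h0 => hu (dotProduct_star_self_eq_zero.mp (hd ▸ h0))
  have hcval : star u ⬝ᵥ (S *ᵥ u) = ν * d := by
    rw [h, dotProduct_smul, hd, smul_eq_mul]
  have hcconj : star (ν * d) = -(ν * d) := by
    rw [← hcval]
    have h1 : star u ⬝ᵥ (S *ᵥ u) = star (star (S *ᵥ u) ⬝ᵥ u) := Matrix.star_dotProduct _ _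
    have h2 : star (S *ᵥ u) ⬝ᵥ u = -(star u ⬝ᵥ (S *ᵥ u)) := by
      rw [Matrix.star_mulVec, hSH, Matrix.vecMul_neg, neg_dotProduct,
        ← Matrix.dotProduct_mulVec]
    calc star (star u ⬝ᵥ (S *ᵥ u)) = star (S *ᵥ u) ⬝ᵥ u := by rw [h1, star_star]
      _ = -(star u ⬝ᵥ (S *ᵥ u)) := h2
  have him : d.im = 0 := by
    have := congrArg Complex.im hdconj
    simp only [Complex.star_def, Complex.conj_im] at this
    linarith
  have hre : d.re ≠ 0 := fun h0 => hdne (Complex.ext h0 him)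
  have hcre : (ν * d).re = 0 := by
    have := congrArg Complex.re hcconj
    simp only [Complex.star_def, Complex.conj_re, Complex.neg_re] at this
    linarith
  rw [Complex.mul_re, him, mul_zero, sub_zero] at hcre
  exact (mul_eq_zero.mp hcre).resolve_right hre

/-- If `Γ` is PSD and `v ≠ 0` is an eigenvector of `J * Γ` with eigenvalue `ν`,
where `Jᴴ = -J`, then `ν` is purely imaginary. -/
lemma re_eq_zero_of_eigen_J_psd {J Γ : Matrix N N ℂ} (hJH : Jᴴ = -J)
    (hΓ : Γ.PosSemidef) {v : N → ℂ} (hv : v ≠ 0) {ν : ℂ}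
    (h : (J * Γ) *ᵥ v = ν • v) : ν.re = 0 := by
  obtain ⟨W, rfl⟩ : ∃ W : Matrix N N ℂ, Γ = Wᴴ * W := by
    open scoped MatrixOrder in exact CStarAlgebra.nonneg_iff_eq_star_mul_self.mp hΓ.nonneg
  by_cases hu0 : W *ᵥ v = 0
  · have hΓv : (Wᴴ * W) *ᵥ v = 0 := by
      rw [← Matrix.mulVec_mulVec, hu0, Matrix.mulVec_zero]
    have hz : ν • v = 0 := by
      rw [← h, ← Matrix.mulVec_mulVec, hΓv, Matrix.mulVec_zero]
    rcases smul_eq_zero.mp hz with h0 | h0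
    · simp [h0]
    · exact absurd h0 hv
  · have hSH : (W * (J * Wᴴ))ᴴ = -(W * (J * Wᴴ)) := by
      simp only [Matrix.conjTranspose_mul, Matrix.conjTranspose_conjTranspose, hJH]
      rw [Matrix.mul_neg, Matrix.neg_mul, Matrix.mul_assoc]
    have hSu : (W * (J * Wᴴ)) *ᵥ (W *ᵥ v) = ν • (W *ᵥ v) := by
      have e1 : (W * (J * Wᴴ)) *ᵥ (W *ᵥ v) = W *ᵥ ((J * (Wᴴ * W)) *ᵥ v) := by
        simp only [Matrix.mulVec_mulVec, Matrix.mul_assoc]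
      rw [e1, h, Matrix.mulVec_smul]
    exact skew_eigen_re_zero hSH hu0 hSu


variable {n : ℕ}

local notation "NN" => (Fin n ⊕ Fin n)

noncomputable def Qb (Q : Matrix NN NN ℂ) : Matrix NN NN ℂ := Q.map (starRingEnd ℂ)
noncomputable def Am (J Q : Matrix NN NN ℂ) : Matrix NN NN ℂ := (-2*Complex.I) • (J * Q)
noncomputable def Bm (J Q : Matrix NN NN ℂ) : Matrix NN NN ℂ := (-2*Complex.I) • (J * Qb Q)
noncomputable def Rm (Q : Matrix NN NN ℂ) : Matrix NN NN ℂ := (2:ℂ)⁻¹ • (Q + Qb Q)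
noncomputable def Kf (J Q : Matrix NN NN ℂ) (s : ℝ) : Matrix NN NN ℂ :=
  exp (s • Am J Q) * exp (s • Bm J Q)
noncomputable def Gm (J Q : Matrix NN NN ℂ) (s : ℝ) : Matrix NN NN ℂ :=
  (Complex.I/4) • (J - J * Kf J Q s)
noncomputable def Dm (J Q : Matrix NN NN ℂ) (s : ℝ) : Matrix NN NN ℂ :=
  (exp (s • Bm J Q))ᴴ * Rm Q * exp (s • Bm J Q)

attribute [local instance] Matrix.linftyOpSemiNormedRing Matrix.linftyOpNormedRing
  Matrix.linftyOpNormedAlgebra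

lemma l_JJ {J : Matrix NN NN ℂ} (hJ : J = Matrix.fromBlocks 0 1 (-1) 0) : J * J = -1 := by
  subst hJ
  rw [Matrix.fromBlocks_multiply]
  simp [← Matrix.fromBlocks_one, Matrix.fromBlocks_neg]

lemma l_JH {J : Matrix NN NN ℂ} (hJ : J = Matrix.fromBlocks 0 1 (-1) 0) : Jᴴ = -J := by
  subst hJ
  rw [Matrix.fromBlocks_conjTranspose]
  simp [Matrix.fromBlocks_neg]

noncomputable def Junit {J : Matrix NN NN ℂ} (hJ : J = Matrix.fromBlocks 0 1 (-1) 0) :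
    (Matrix NN NN ℂ)ˣ :=
  ⟨J, -J, by rw [Matrix.mul_neg, l_JJ hJ]; simp, by rw [Matrix.neg_mul, l_JJ hJ]; simp⟩

lemma l_Junit_val {J : Matrix NN NN ℂ} (hJ : J = Matrix.fromBlocks 0 1 (-1) 0) :
    (Junit hJ : Matrix NN NN ℂ) = J := rfl
lemma l_Junit_inv {J : Matrix NN NN ℂ} (hJ : J = Matrix.fromBlocks 0 1 (-1) 0) :
    (((Junit hJ)⁻¹ : (Matrix NN NN ℂ)ˣ) : Matrix NN NN ℂ) = (-J : Matrix NN NN ℂ) := rfl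

lemma l_QbH {Q : Matrix NN NN ℂ} (hQ : Qᵀ = Q) : (Qb Q)ᴴ = Q := by
  rw [Qb]
  ext i j
  have h := congrFun (congrFun hQ i) j
  simp only [Matrix.transpose_apply] at h
  simp [Matrix.conjTranspose_apply, Matrix.map_apply, h]

lemma l_QH {Q : Matrix NN NN ℂ} (hQ : Qᵀ = Q) : Qᴴ = Qb Q := by
  rw [Qb]
  ext i j
  have h := congrFun (congrFun hQ i) j
  simp only [Matrix.transpose_apply] at h
  simp [Matrix.conjTranspose_apply, Matrix.map_apply, h]

lemma l_AH {J Q : Matrix NN NN ℂ} (hJ : J = Matrix.fromBlocks 0 1 (-1) 0) (hQ : Qᵀ = Q) :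
    (Am J Q)ᴴ = (-2*Complex.I) • (Qb Q * J) := by
  rw [Am, Matrix.conjTranspose_smul, Matrix.conjTranspose_mul, l_QH hQ, l_JH hJ]
  rw [Matrix.mul_neg, smul_neg, ← neg_smul]
  congr 1
  simp [Complex.ext_iff]

lemma l_BH {J Q : Matrix NN NN ℂ} (hJ : J = Matrix.fromBlocks 0 1 (-1) 0) (hQ : Qᵀ = Q) :
    (Bm J Q)ᴴ = (-2*Complex.I) • (Q * J) := by
  rw [Bm, Matrix.conjTranspose_smul, Matrix.conjTranspose_mul, l_QbH hQ, l_JH hJ]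
  rw [Matrix.mul_neg, smul_neg, ← neg_smul]
  congr 1
  simp [Complex.ext_iff]

lemma l_JA {J Q : Matrix NN NN ℂ} (hJ : J = Matrix.fromBlocks 0 1 (-1) 0) (hQ : Qᵀ = Q) :
    J * Am J Q = (Bm J Q)ᴴ * J := by
  rw [Am, l_BH hJ hQ, mul_smul_comm, smul_mul_assoc, ← Matrix.mul_assoc J J Q, l_JJ hJ,
    Matrix.mul_assoc Q J J, l_JJ hJ]
  simp

lemma l_JB {J Q : Matrix NN NN ℂ} (hJ : J = Matrix.fromBlocks 0 1 (-1) 0) (hQ : Qᵀ = Q) :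
    J * Bm J Q = (Am J Q)ᴴ * J := by
  rw [Bm, l_AH hJ hQ, mul_smul_comm, smul_mul_assoc, ← Matrix.mul_assoc J J (Qb Q), l_JJ hJ,
    Matrix.mul_assoc (Qb Q) J J, l_JJ hJ]
  simp

lemma l_JexpA {J Q : Matrix NN NN ℂ} (hJ : J = Matrix.fromBlocks 0 1 (-1) 0) (hQ : Qᵀ = Q)
    (s : ℝ) : J * exp (s • Am J Q) = (exp (s • Bm J Q))ᴴ * J := by
  have h1 : (Junit hJ : Matrix NN NN ℂ) * (s • Am J Q) * (((Junit hJ)⁻¹ : (Matrix NN NN ℂ)ˣ) : Matrix NN NN ℂ)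
      = s • (Bm J Q)ᴴ := by
    rw [l_Junit_val, l_Junit_inv, mul_smul_comm, smul_mul_assoc, l_JA hJ hQ,
      Matrix.mul_assoc, Matrix.mul_neg, l_JJ hJ]
    simp
  have h2 := Matrix.exp_units_conj (Junit hJ) (s • Am J Q)
  rw [h1] at h2
  have h3 : exp (s • (Bm J Q)ᴴ) = (exp (s • Bm J Q))ᴴ := by
    rw [← Matrix.exp_conjTranspose, Matrix.conjTranspose_smul, star_trivial]
  rw [h3] at h2
  calc J * exp (s • Am J Q)
      = ((Junit hJ : Matrix NN NN ℂ) * exp (s • Am J Q) *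
          (((Junit hJ)⁻¹ : (Matrix NN NN ℂ)ˣ) : Matrix NN NN ℂ)) * J := by
        rw [l_Junit_val, l_Junit_inv, Matrix.mul_assoc (J * exp (s • Am J Q)), Matrix.neg_mul,
          l_JJ hJ]
        simp
    _ = (exp (s • Bm J Q))ᴴ * J := by rw [← h2]

lemma l_JexpB {J Q : Matrix NN NN ℂ} (hJ : J = Matrix.fromBlocks 0 1 (-1) 0) (hQ : Qᵀ = Q)
    (s : ℝ) : J * exp (s • Bm J Q) = (exp (s • Am J Q))ᴴ * J := by
  have h1 : (Junit hJ : Matrix NN NN ℂ) * (s • Bm J Q) * (((Junit hJ)⁻¹ : (Matrix NN NN ℂ)ˣ) : Matrix NN NN ℂ)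
      = s • (Am J Q)ᴴ := by
    rw [l_Junit_val, l_Junit_inv, mul_smul_comm, smul_mul_assoc, l_JB hJ hQ,
      Matrix.mul_assoc, Matrix.mul_neg, l_JJ hJ]
    simp
  have h2 := Matrix.exp_units_conj (Junit hJ) (s • Bm J Q)
  rw [h1] at h2
  have h3 : exp (s • (Am J Q)ᴴ) = (exp (s • Am J Q))ᴴ := by
    rw [← Matrix.exp_conjTranspose, Matrix.conjTranspose_smul, star_trivial]
  rw [h3] at h2
  calc J * exp (s • Bm J Q)
      = ((Junit hJ : Matrix NN NN ℂ) * exp (s • Bm J Q) *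
          (((Junit hJ)⁻¹ : (Matrix NN NN ℂ)ˣ) : Matrix NN NN ℂ)) * J := by
        rw [l_Junit_val, l_Junit_inv, Matrix.mul_assoc (J * exp (s • Bm J Q)), Matrix.neg_mul,
          l_JJ hJ]
        simp
    _ = (exp (s • Am J Q))ᴴ * J := by rw [← h2]

lemma l_JK {J Q : Matrix NN NN ℂ} (hJ : J = Matrix.fromBlocks 0 1 (-1) 0) (hQ : Qᵀ = Q)
    (s : ℝ) : J * Kf J Q s = (Kf J Q s)ᴴ * J := by
  rw [Kf, ← Matrix.mul_assoc, l_JexpA hJ hQ, Matrix.mul_assoc, l_JexpB hJ hQ,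
    Matrix.conjTranspose_mul, ← Matrix.mul_assoc]

lemma l_G_herm {J Q : Matrix NN NN ℂ} (hJ : J = Matrix.fromBlocks 0 1 (-1) 0) (hQ : Qᵀ = Q)
    (s : ℝ) : (Gm J Q s).IsHermitian := by
  unfold Matrix.IsHermitian
  rw [Gm, Matrix.conjTranspose_smul, Matrix.conjTranspose_sub, Matrix.conjTranspose_mul,
    l_JH hJ]
  rw [show (Kf J Q s)ᴴ * (-J) = -((Kf J Q s)ᴴ * J) from Matrix.mul_neg _ _,
    ← l_JK hJ hQ]
  rw [show (-J - -(J * Kf J Q s)) = -(J - J * Kf J Q s) from by abel]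
  rw [smul_neg, ← neg_smul]
  congr 1
  simp only [Complex.star_def, map_div₀, Complex.conj_I, Complex.conj_ofNat]
  ring


lemma l_exp_deriv (M : Matrix NN NN ℂ) (s : ℝ) :
    HasDerivAt (fun u : ℝ => exp (u • M)) (exp (s • M) * M) s := by
  have h := hasDerivAt_exp_smul_const (𝕂 := ℝ) M s
  exact h

lemma l_exp_cont (M : Matrix NN NN ℂ) : Continuous (fun u : ℝ => exp (u • M)) :=
  continuous_iff_continuousAt.2 fun s => (l_exp_deriv M s).continuousAt

lemma l_K_cont (J Q : Matrix NN NN ℂ) : Continuous (Kf J Q) :=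
  ((l_exp_cont (Am J Q)).matrix_mul (l_exp_cont (Bm J Q)))

lemma l_K0 (J Q : Matrix NN NN ℂ) : Kf J Q 0 = 1 := by
  rw [Kf, zero_smul, zero_smul, exp_zero, one_mul]

lemma l_K_unit (J Q : Matrix NN NN ℂ) (s : ℝ) : IsUnit (Kf J Q s) :=
  (Matrix.isUnit_exp _).mul (Matrix.isUnit_exp _)

lemma l_K_deriv (J Q : Matrix NN NN ℂ) (s : ℝ) :
    HasDerivAt (Kf J Q)
      (exp (s • Am J Q) * (Am J Q + Bm J Q) * exp (s • Bm J Q)) s := by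
  have hE := l_exp_deriv (Am J Q) s
  have hF := l_exp_deriv (Bm J Q) s
  have h := hE.mul hF
  have hcomm : exp (s • Bm J Q) * Bm J Q = Bm J Q * exp (s • Bm J Q) :=
    ((((Commute.refl (Bm J Q)).smul_right s)).exp_right).eq.symm
  refine h.congr_deriv (Eq.symm ?_)
  rw [Matrix.mul_add, Matrix.add_mul, hcomm, ← Matrix.mul_assoc]

lemma l_G_deriv {J Q : Matrix NN NN ℂ} (hJ : J = Matrix.fromBlocks 0 1 (-1) 0) (hQ : Qᵀ = Q)
    (s : ℝ) : HasDerivAt (Gm J Q) (Dm J Q s) s := by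
  have hK := l_K_deriv J Q s
  have h2 := ((hasDerivAt_const s J).sub (hK.const_mul J)).const_smul (Complex.I/4)
  have hfun : ((Complex.I/4) • ((fun _ => J) - fun u => J * Kf J Q u)) = Gm J Q := rfl
  rw [hfun] at h2
  refine h2.congr_deriv (Eq.symm ?_)
  rw [zero_sub]
  have hAB : Am J Q + Bm J Q = (-2*Complex.I) • (J * (Q + Qb Q)) := by
    rw [Am, Bm, ← smul_add, Matrix.mul_add]
  rw [hAB]
  have key : J * (exp (s • Am J Q) * ((-2*Complex.I) • (J * (Q + Qb Q))) * exp (s • Bm J Q))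
      = (-2*Complex.I) • (((exp (s • Bm J Q))ᴴ * J) * ((J * (Q + Qb Q)) * exp (s • Bm J Q))) := by
    rw [← l_JexpA hJ hQ s]
    simp only [mul_smul_comm, smul_mul_assoc, Matrix.mul_assoc]
  rw [key]
  have key2 : ((exp (s • Bm J Q))ᴴ * J) * ((J * (Q + Qb Q)) * exp (s • Bm J Q))
      = -((exp (s • Bm J Q))ᴴ * ((Q + Qb Q) * exp (s • Bm J Q))) := by
    rw [Matrix.mul_assoc ((exp (s • Bm J Q))ᴴ) J, ← Matrix.mul_assoc J (J * (Q + Qb Q)),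
      ← Matrix.mul_assoc J J, l_JJ hJ]
    simp [Matrix.mul_assoc, mul_add, add_mul, neg_mul, mul_neg, neg_add, add_comm]
  rw [key2]
  simp only [smul_neg, neg_neg, smul_smul]
  rw [Dm, Rm, mul_smul_comm, smul_mul_assoc, Matrix.mul_assoc]
  congr 1
  simp [Complex.ext_iff]
  norm_num

noncomputable def quadL (x : NN → ℂ) : Matrix NN NN ℂ →ₗ[ℝ] ℂ where
  toFun M := star x ⬝ᵥ (M *ᵥ x)
  map_add' M N := by simp [Matrix.add_mulVec, dotProduct_add]
  map_smul' r M := by simp [Matrix.smul_mulVec, dotProduct_smul]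

noncomputable def quadCLM (x : NN → ℂ) : Matrix NN NN ℂ →L[ℝ] ℂ :=
  LinearMap.toContinuousLinearMap (quadL x)

lemma quadCLM_apply (x : NN → ℂ) (M : Matrix NN NN ℂ) :
    quadCLM x M = star x ⬝ᵥ (M *ᵥ x) := rfl

lemma l_D_val (J Q : Matrix NN NN ℂ) (x : NN → ℂ) (s : ℝ) :
    quadCLM x (Dm J Q s) =
      star (exp (s • Bm J Q) *ᵥ x) ⬝ᵥ (Rm Q *ᵥ (exp (s • Bm J Q) *ᵥ x)) := by
  rw [quadCLM_apply, Dm, ← Matrix.mulVec_mulVec, ← Matrix.mulVec_mulVec,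
    Matrix.dotProduct_mulVec, ← Matrix.star_mulVec]

lemma l_D_cont (J Q : Matrix NN NN ℂ) (x : NN → ℂ) :
    Continuous fun s : ℝ => quadCLM x (Dm J Q s) := by
  apply (quadCLM x).continuous.comp
  exact ((l_exp_cont (Bm J Q)).matrix_conjTranspose.matrix_mul continuous_const).matrix_mul
    (l_exp_cont (Bm J Q))

lemma l_G_quad {J Q : Matrix NN NN ℂ} (hJ : J = Matrix.fromBlocks 0 1 (-1) 0) (hQ : Qᵀ = Q)
    (x : NN → ℂ) (t : ℝ) :
    quadCLM x (Gm J Q t) = ∫ s in (0:ℝ)..t, quadCLM x (Dm J Q s) := by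
  have hd : ∀ s ∈ Set.uIcc (0:ℝ) t,
      HasDerivAt (fun u => quadCLM x (Gm J Q u)) (quadCLM x (Dm J Q s)) s :=
    fun s _ => ((quadCLM x).hasFDerivAt.comp_hasDerivAt s (l_G_deriv hJ hQ s))
  have hint : IntervalIntegrable (fun s => quadCLM x (Dm J Q s)) MeasureTheory.volume 0 t :=
    (l_D_cont J Q x).intervalIntegrable 0 t
  have hftc := intervalIntegral.integral_eq_sub_of_hasDerivAt hd hint
  rw [hftc]
  have hG0 : Gm J Q 0 = 0 := by rw [Gm, l_K0, Matrix.mul_one, sub_self, smul_zero]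
  rw [hG0, map_zero, sub_zero]

lemma l_quad_re_im {J Q : Matrix NN NN ℂ} (hpos : (Rm Q).PosSemidef) (x : NN → ℂ) (s : ℝ) :
    0 ≤ (quadCLM x (Dm J Q s)).re ∧ (quadCLM x (Dm J Q s)).im = 0 := by
  have h := hpos.dotProduct_mulVec_nonneg (exp (s • Bm J Q) *ᵥ x)
  rw [← l_D_val] at h
  rw [Complex.le_def] at h
  exact ⟨by simpa using h.1, by simpa using h.2.symm⟩

lemma l_G_int_re_im {J Q : Matrix NN NN ℂ} (hJ : J = Matrix.fromBlocks 0 1 (-1) 0)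
    (hQ : Qᵀ = Q) (x : NN → ℂ) (t : ℝ) :
    (quadCLM x (Gm J Q t)).re = (∫ s in (0:ℝ)..t, (quadCLM x (Dm J Q s)).re) ∧
    (quadCLM x (Gm J Q t)).im = (∫ s in (0:ℝ)..t, (quadCLM x (Dm J Q s)).im) := by
  have hint : IntervalIntegrable (fun s => quadCLM x (Dm J Q s)) MeasureTheory.volume 0 t :=
    (l_D_cont J Q x).intervalIntegrable 0 t
  constructor
  · rw [l_G_quad hJ hQ x t]
    exact (Complex.reCLM.intervalIntegral_comp_comm hint).symm
  · rw [l_G_quad hJ hQ x t]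
    exact (Complex.imCLM.intervalIntegral_comp_comm hint).symm

lemma l_G_psd {J Q : Matrix NN NN ℂ} (hJ : J = Matrix.fromBlocks 0 1 (-1) 0) (hQ : Qᵀ = Q)
    (hpos : (Rm Q).PosSemidef) {t : ℝ} (ht : 0 ≤ t) : (Gm J Q t).PosSemidef := by
  refine .of_dotProduct_mulVec_nonneg (l_G_herm hJ hQ t) fun x => ?_
  have key : (0:ℂ) ≤ quadCLM x (Gm J Q t) := by
    rw [Complex.le_def]
    obtain ⟨hre, him⟩ := l_G_int_re_im hJ hQ x t
    refine ⟨?_, ?_⟩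
    · rw [hre]
      simpa using intervalIntegral.integral_nonneg ht
        (fun s _ => (l_quad_re_im hpos x s).1)
    · rw [him]
      simp only [Complex.zero_im]
      rw [show (fun s => (quadCLM x (Dm J Q s)).im) = fun _ => (0:ℝ) from
        funext fun s => (l_quad_re_im hpos x s).2]
      simp
  rwa [quadCLM_apply] at key

lemma l_G_psd_neg {J Q : Matrix NN NN ℂ} (hJ : J = Matrix.fromBlocks 0 1 (-1) 0) (hQ : Qᵀ = Q)
    (hpos : (Rm Q).PosSemidef) {t : ℝ} (ht : t ≤ 0) : (-(Gm J Q t)).PosSemidef := by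
  refine .of_dotProduct_mulVec_nonneg (l_G_herm hJ hQ t).neg fun x => ?_
  have key : (0:ℂ) ≤ -(quadCLM x (Gm J Q t)) := by
    rw [Complex.le_def]
    obtain ⟨hre, him⟩ := l_G_int_re_im hJ hQ x t
    have hswap : ∀ f : ℝ → ℝ, (∫ s in (0:ℝ)..t, f s) = -(∫ s in t..(0:ℝ), f s) := by
      intro f
      rw [intervalIntegral.integral_symm]
    refine ⟨?_, ?_⟩
    · simp only [Complex.neg_re, Complex.zero_re]
      rw [hre, hswap]
      simp only [neg_neg]
      simpa using intervalIntegral.integral_nonneg ht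
        (fun s _ => (l_quad_re_im hpos x s).1)
    · simp only [Complex.neg_im, Complex.zero_im]
      rw [him]
      rw [show (fun s => (quadCLM x (Dm J Q s)).im) = fun _ => (0:ℝ) from
        funext fun s => (l_quad_re_im hpos x s).2]
      simp
  have : star x ⬝ᵥ ((-(Gm J Q t)) *ᵥ x) = -(quadCLM x (Gm J Q t)) := by
    rw [quadCLM_apply, Matrix.neg_mulVec, dotProduct_neg]
  rwa [this]

lemma l_JG {J Q : Matrix NN NN ℂ} (hJ : J = Matrix.fromBlocks 0 1 (-1) 0) (s : ℝ) :
    J * Gm J Q s = (Complex.I/4) • (Kf J Q s - 1) := by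
  rw [Gm, mul_smul_comm, Matrix.mul_sub, ← Matrix.mul_assoc, l_JJ hJ]
  rw [neg_one_mul, sub_neg_eq_add, neg_add_eq_sub]

lemma l_im_zero {J Q : Matrix NN NN ℂ} (hJ : J = Matrix.fromBlocks 0 1 (-1) 0) (hQ : Qᵀ = Q)
    (hpos : (Rm Q).PosSemidef) (s : ℝ) {μ : ℂ} (hμ : μ ∈ spectrum ℂ (Kf J Q s)) :
    μ.im = 0 := by
  obtain ⟨v, hv, hKv⟩ := exists_eigenvector hμ
  have heig : (J * Gm J Q s) *ᵥ v = ((Complex.I/4) * (μ - 1)) • v := by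
    rw [l_JG hJ, Matrix.smul_mulVec, Matrix.sub_mulVec, hKv, Matrix.one_mulVec]
    rw [show μ • v - v = (μ - 1) • v from by rw [sub_smul, one_smul], smul_smul]
  have hre : ((Complex.I/4) * (μ - 1)).re = 0 := by
    rcases le_total 0 s with hs | hs
    · exact re_eq_zero_of_eigen_J_psd (l_JH hJ) (l_G_psd hJ hQ hpos hs) hv heig
    · have hneg : (J * (-(Gm J Q s))) *ᵥ v = (-((Complex.I/4) * (μ - 1))) • v := by
        rw [Matrix.mul_neg, Matrix.neg_mulVec, heig, neg_smul]
      have := re_eq_zero_of_eigen_J_psd (l_JH hJ) (l_G_psd_neg hJ hQ hpos hs) hv hneg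
      simpa using this
  have h4 : ((Complex.I/4) * (μ - 1)).re = -(μ.im/4) := by
    simp [Complex.mul_re, Complex.div_re, Complex.div_im]
    ring
  rw [h4] at hre
  linarith

lemma l_det_lower {M : Matrix NN NN ℂ} (hM : ∀ l ∈ spectrum ℂ M, l.im = 0 ∧ 0 < l.re)
    {μ : ℂ} (hμre : μ.re ≤ 0) (hμim : μ.im = 0) :
    ‖μ‖₊ ^ (Fintype.card NN) ≤ ‖(μ • (1:Matrix NN NN ℂ) - M).det‖₊ := by
  set P : Matrix NN NN ℂ := μ • (1:Matrix NN NN ℂ) - M with hP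
  have hdet : P.det = P.charpoly.roots.prod := Matrix.det_eq_prod_roots_charpoly P
  have hroot : ∀ r ∈ P.charpoly.roots, ‖μ‖₊ ≤ ‖r‖₊ := by
    intro r hr
    have hr0 : P.charpoly.IsRoot r := (Polynomial.mem_roots'.1 hr).2
    have hev : (r • (1:Matrix NN NN ℂ) - P).det = 0 := by
      rw [← eval_charpoly]
      exact hr0
    have hEq : r • (1:Matrix NN NN ℂ) - P = -((μ - r) • (1:Matrix NN NN ℂ) - M) := by
      rw [hP, sub_smul]
      abel
    have h2 : ((μ - r) • (1:Matrix NN NN ℂ) - M).det = 0 := by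
      rw [hEq, Matrix.det_neg, mul_eq_zero] at hev
      rcases hev with h | h
      · exact absurd h (pow_ne_zero _ (neg_ne_zero.2 one_ne_zero))
      · exact h
    have hspec : (μ - r) ∈ spectrum ℂ M := (mem_spectrum_iff_det M _).2 h2
    obtain ⟨him, hre⟩ := hM _ hspec
    -- r is real with r.re ≤ μ.re ≤ 0
    have hrim : r.im = 0 := by
      have : (μ - r).im = μ.im - r.im := Complex.sub_im μ r
      rw [him] at this
      rw [hμim] at this
      linarith
    have hrre : r.re < μ.re := by
      have : (μ - r).re = μ.re - r.re := Complex.sub_re μ r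
      rw [this] at hre
      linarith
    -- compare norms
    rw [← NNReal.coe_le_coe]
    push_cast
    have h1 : ‖μ‖ = |μ.re| := by
      rw [show μ = ((μ.re:ℝ):ℂ) from Complex.ext rfl (by simp [hμim])]
      exact Complex.norm_real _
    have h2' : |r.re| ≤ ‖r‖ := by
      exact Complex.abs_re_le_norm r
    rw [h1]
    have : |μ.re| ≤ |r.re| := by
      rw [abs_of_nonpos hμre, abs_of_nonpos (by linarith)]
      linarith
    linarith
  have hcard : Multiset.card P.charpoly.roots = Fintype.card NN := by
    rw [← Matrix.charpoly_natDegree_eq_dim P]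
    exact (Polynomial.splits_iff_card_roots.mp (IsAlgClosed.splits _))
  have hnorm : ‖P.det‖₊ = (P.charpoly.roots.map (fun z => ‖z‖₊)).prod := by
    rw [hdet]
    exact map_multiset_prod (nnnormHom : ℂ →*₀ ℝ≥0) _
  rw [hnorm, ← hcard]
  have := Multiset.pow_card_le_prod (s := P.charpoly.roots.map (fun z => ‖z‖₊)) (a := ‖μ‖₊)
    (fun x hx => by
      obtain ⟨r, hr, rfl⟩ := Multiset.mem_map.1 hx
      exact hroot r hr)
  simpa using this

lemma l_U_closed {J Q : Matrix NN NN ℂ} (hJ : J = Matrix.fromBlocks 0 1 (-1) 0) (hQ : Qᵀ = Q)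
    (hpos : (Rm Q).PosSemidef) :
    IsClosed {s : ℝ | ∀ μ ∈ spectrum ℂ (Kf J Q s), 0 < μ.re} := by
  apply isClosed_of_closure_subset
  intro t ht μ hμ
  by_contra hc
  push_neg at hc
  have hμim := l_im_zero hJ hQ hpos t hμ
  have hμ0 : μ ≠ 0 := by
    intro h0
    subst h0
    exact (spectrum.zero_notMem_iff ℂ).2 (l_K_unit J Q t) hμ
  set c : ℝ≥0 := ‖μ‖₊ ^ (Fintype.card NN) with hcdef
  have hcpos : 0 < c := pow_pos (nnnorm_pos.2 hμ0) _
  set F : Set ℝ := {s : ℝ | c ≤ ‖(μ • (1:Matrix NN NN ℂ) - Kf J Q s).det‖₊} with hFdef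
  have hFclosed : IsClosed F := by
    apply isClosed_le continuous_const
    exact ((continuous_const.sub (l_K_cont J Q)).matrix_det).nnnorm
  have hUF : {s : ℝ | ∀ μ' ∈ spectrum ℂ (Kf J Q s), 0 < μ'.re} ⊆ F := fun s hs =>
    l_det_lower (fun l hl => ⟨l_im_zero hJ hQ hpos s hl, hs l hl⟩) hc hμim
  have htF : t ∈ F := hFclosed.closure_subset_iff.2 hUF ht
  have hdet0 : (μ • (1:Matrix NN NN ℂ) - Kf J Q t).det = 0 := (mem_spectrum_iff_det _ μ).1 hμ
  rw [hFdef, Set.mem_setOf_eq, hdet0] at htF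
  simp only [nnnorm_zero, le_zero_iff] at htF
  exact absurd htF hcpos.ne'

lemma l_C_closed {J Q : Matrix NN NN ℂ} (hJ : J = Matrix.fromBlocks 0 1 (-1) 0) (hQ : Qᵀ = Q)
    (hpos : (Rm Q).PosSemidef) :
    IsClosed {s : ℝ | ∃ μ ∈ spectrum ℂ (Kf J Q s), μ.re ≤ 0} := by
  set C : Set ℝ := {s : ℝ | ∃ μ ∈ spectrum ℂ (Kf J Q s), μ.re ≤ 0} with hCdef
  apply isClosed_of_closure_subset
  intro t ht
  have ht' : t ∈ closure (C ∩ Set.Icc (t-1) (t+1)) := by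
    rw [mem_closure_iff_nhds] at ht ⊢
    intro N hN
    obtain ⟨y, hy⟩ := ht (N ∩ Set.Ioo (t-1) (t+1))
      (Filter.inter_mem hN (Ioo_mem_nhds (by linarith) (by linarith)))
    exact ⟨y, hy.1.1, hy.2, Set.Ioo_subset_Icc_self hy.1.2⟩
  obtain ⟨u, hu, hut⟩ := mem_closure_iff_seq_limit.1 ht'
  choose μs hμmem hμre using fun k => (hu k).1
  obtain ⟨s₀, hs₀mem, hs₀'⟩ := (isCompact_Icc (a := t-1) (b := t+1)).exists_isMaxOn
      ⟨t, by constructor <;> linarith⟩ ((l_K_cont J Q).norm.continuousOn)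
  have hs₀ : ∀ y ∈ Set.Icc (t-1) (t+1), ‖Kf J Q y‖ ≤ ‖Kf J Q s₀‖ := isMaxOn_iff.1 hs₀'
  set Mb : ℝ := ‖Kf J Q s₀‖ * ‖(1 : Matrix NN NN ℂ)‖ with hMbdef
  have him : ∀ k, (μs k).im = 0 := fun k => l_im_zero hJ hQ hpos (u k) (hμmem k)
  have hbd : ∀ k, (μs k).re ∈ Set.Icc (-Mb) 0 := by
    intro k
    refine ⟨?_, hμre k⟩
    have h1 : ‖μs k‖ ≤ ‖Kf J Q (u k)‖ * ‖(1 : Matrix NN NN ℂ)‖ :=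
      spectrum.norm_le_norm_mul_of_mem (hμmem k)
    have h2 : ‖Kf J Q (u k)‖ * ‖(1 : Matrix NN NN ℂ)‖ ≤ Mb :=
      mul_le_mul_of_nonneg_right (hs₀ (u k) (hu k).2) (norm_nonneg _)
    have h3 : |(μs k).re| ≤ ‖μs k‖ := by
      exact Complex.abs_re_le_norm _
    have := abs_le.1 (le_trans h3 (le_trans h1 h2))
    exact this.1
  obtain ⟨a, haC, φ, hφ, hconv⟩ := tendsto_subseq_of_bounded (Metric.isBounded_Icc (-Mb) 0) hbd
  have haIcc : a ∈ Set.Icc (-Mb) 0 := by rwa [isClosed_Icc.closure_eq] at haC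
  have hcont : Continuous fun p : ℝ × ℝ =>
      (((p.2:ℂ)) • (1:Matrix NN NN ℂ) - Kf J Q p.1).det := by
    apply Continuous.matrix_det
    exact ((Complex.continuous_ofReal.comp continuous_snd).smul continuous_const).sub
      ((l_K_cont J Q).comp continuous_fst)
  have hzero : ∀ k, ((((μs (φ k)).re:ℝ):ℂ) • (1:Matrix NN NN ℂ) - Kf J Q (u (φ k))).det = 0 := by
    intro k
    have he : μs (φ k) = (((μs (φ k)).re:ℝ):ℂ) := Complex.ext rfl (by simp [him])
    rw [← he]
    exact (mem_spectrum_iff_det _ _).1 (hμmem (φ k))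
  have hlim : Filter.Tendsto (fun k => (u (φ k), (μs (φ k)).re)) Filter.atTop (nhds (t, a)) := by
    apply Filter.Tendsto.prodMk_nhds
    · exact hut.comp hφ.tendsto_atTop
    · exact hconv
  have hcomp := (hcont.tendsto (t, a)).comp hlim
  have hfun : ((fun p : ℝ × ℝ => (((p.2:ℂ)) • (1:Matrix NN NN ℂ) - Kf J Q p.1).det) ∘
      fun k => (u (φ k), (μs (φ k)).re)) = fun _ => (0:ℂ) := funext fun k => hzero k
  rw [hfun] at hcomp
  have hdet : (((a:ℝ):ℂ) • (1:Matrix NN NN ℂ) - Kf J Q t).det = 0 := by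
    have := tendsto_nhds_unique hcomp tendsto_const_nhds
    simpa using this
  exact ⟨((a:ℝ):ℂ), (mem_spectrum_iff_det _ _).2 hdet, by simpa using haIcc.2⟩

lemma l_main {J Q : Matrix NN NN ℂ} (hJ : J = Matrix.fromBlocks 0 1 (-1) 0) (hQ : Qᵀ = Q)
    (hpos : (Rm Q).PosSemidef) (t : ℝ) :
    ∀ μ ∈ spectrum ℂ (Kf J Q t), μ.im = 0 ∧ 0 < μ.re := by
  set U : Set ℝ := {s | ∀ μ ∈ spectrum ℂ (Kf J Q s), 0 < μ.re} with hUdef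
  have hcompl : Uᶜ = {s : ℝ | ∃ μ ∈ spectrum ℂ (Kf J Q s), μ.re ≤ 0} := by
    ext s
    simp only [hUdef, Set.mem_compl_iff, Set.mem_setOf_eq]
    push_neg
    rfl
  have hclopen : IsClopen U := by
    constructor
    · exact l_U_closed hJ hQ hpos
    · rw [← isClosed_compl_iff, hcompl]
      exact l_C_closed hJ hQ hpos
  have h0 : (0:ℝ) ∈ U := by
    intro μ hμ
    rw [l_K0] at hμ
    have hdet := (mem_spectrum_iff_det _ _).1 hμ
    rw [show μ • (1:Matrix NN NN ℂ) - 1 = (μ - 1) • 1 from by rw [sub_smul, one_smul],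
      Matrix.det_smul, Matrix.det_one, mul_one] at hdet
    have hμ1 : μ = 1 := by
      have := (pow_eq_zero_iff'.1 hdet).1
      have h2 := sub_eq_zero.1 this
      exact h2
    simp [hμ1]
  have hU : U = Set.univ := hclopen.eq_univ ⟨0, h0⟩
  intro μ hμ
  have htU : t ∈ U := by rw [hU]; trivial
  exact ⟨l_im_zero hJ hQ hpos t hμ, htU μ hμ⟩

end EigKtAux

open Matrix NormedSpace
open scoped ComplexOrder

theorem eigenvalues_Kt_positive_real (n : ℕ) (t : ℝ)
    (J Q : Matrix (Fin n ⊕ Fin n) (Fin n ⊕ Fin n) ℂ)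
    (hJ : J = Matrix.fromBlocks 0 1 (-1) 0)
    (hQ : Qᵀ = Q)
    (hpos : ((2:ℂ)⁻¹ • (Q + Q.map (starRingEnd ℂ))).PosSemidef) :
    ∀ μ ∈ spectrum ℂ
        (exp ((-2 * Complex.I * (t:ℂ)) • (J * Q)) *
          exp ((-2 * Complex.I * (t:ℂ)) • (J * Q.map (starRingEnd ℂ)))),
      μ.im = 0 ∧ 0 < μ.re := by
  intro μ hμ
  have hsm : (-2 * Complex.I * (t:ℂ)) • (J * Q) = (t:ℝ) • EigKtAux.Am J Q := by
    rw [EigKtAux.Am, ← smul_assoc]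
    congr 1
    rw [Complex.real_smul]
    ring
  have hsm2 : (-2 * Complex.I * (t:ℂ)) • (J * Q.map (starRingEnd ℂ)) = (t:ℝ) • EigKtAux.Bm J Q := by
    rw [EigKtAux.Bm, ← smul_assoc]
    congr 1
    rw [Complex.real_smul]
    ring
  have hK : exp ((-2 * Complex.I * (t:ℂ)) • (J * Q)) *
      exp ((-2 * Complex.I * (t:ℂ)) • (J * Q.map (starRingEnd ℂ))) = EigKtAux.Kf J Q t := by
    rw [EigKtAux.Kf, hsm, hsm2]
  rw [hK] at hμ
  have hpos' : (EigKtAux.Rm Q).PosSemidef := hpos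
  exact EigKtAux.l_main hJ hQ hpos' t μ hμ
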